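/- Let n ≥ 1 and 0 ≤ c ≤ 1. Then μ_n({u ∈ (0,1)^n : there exists k with 0 ≤ k ≤ n such that u_(k+1) − u_(k) > c}) ≤ (n+1)(1 − c)^n; i.e., the probability that the maximum consecutive spacing of the order statistics of n i.i.d. Uniform(0,1) random variables exceeds c is at most (n+1)(1 − c)^n. -/
import Mathlib


open MeasureTheory
open scoped ENNReal
open scoped Classical

/-- The uniform probability measure on the interval `(0,1) ⊂ ℝ`. -/
noncomputable def unifMeas : Measure ℝ := MeasureTheory.volume.restrict (Set.Ioo (0 : ℝ) 1)

/-- The `n`-fold product of the uniform measure on `(0,1)`. -/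
noncomputable def unifPi (n : ℕ) : Measure (Fin n → ℝ) := Measure.pi fun _ => unifMeas

/-- The `k`-th order statistic `u_(k) = inf {x : #{i : u i ≤ x} ≥ k}` for `1 ≤ k ≤ n`,
with the conventions `u_(0) := 0` and `u_(n+1) := 1`. -/
noncomputable def orderStat (n : ℕ) (u : Fin n → ℝ) (k : ℕ) : ℝ :=
  if k = 0 then 0
  else if k = n + 1 then 1
  else sInf {x : ℝ | k ≤ (Finset.univ.filter fun i : Fin n => u i ≤ x).card}


section OrderStat

variable {n : ℕ} {u : Fin n → ℝ} (hu : ∀ i, u i ∈ Set.Ioo (0:ℝ) 1)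

/-- counting function -/
noncomputable def cnt (u : Fin n → ℝ) (x : ℝ) : ℕ := (Finset.univ.filter fun i : Fin n => u i ≤ x).card

lemma cnt_mono {x y : ℝ} (h : x ≤ y) : cnt u x ≤ cnt u y := by
  apply Finset.card_le_card
  intro i hi
  simp only [Finset.mem_filter, Finset.mem_univ, true_and] at hi ⊢
  linarith

include hu in
lemma SSet_bddBelow (k : ℕ) (hk : 1 ≤ k) :
    BddBelow {x : ℝ | k ≤ cnt u x} := by
  refine ⟨0, fun y hy => ?_⟩
  by_contra h
  push_neg at h
  have : cnt u y = 0 := by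
    apply Finset.card_eq_zero.mpr
    apply Finset.filter_false_of_mem
    intro i _
    have := (hu i).1
    push_neg
    linarith
  simp only [Set.mem_setOf_eq, this] at hy
  omega

include hu in
lemma SSet_nonempty (k : ℕ) (hk : k ≤ n) :
    (1:ℝ) ∈ {x : ℝ | k ≤ cnt u x} := by
  have : cnt u 1 = n := by
    have : (Finset.univ.filter fun i : Fin n => u i ≤ (1:ℝ)) = Finset.univ := by
      apply Finset.filter_true_of_mem
      intro i _
      exact le_of_lt (hu i).2
    simp [cnt, this]
  simp [Set.mem_setOf_eq, this, hk]

lemma orderStat_eq (k : ℕ) (hk1 : 1 ≤ k) (hkn : k ≤ n) :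
    orderStat n u k = sInf {x : ℝ | k ≤ cnt u x} := by
  unfold orderStat cnt
  rw [if_neg (by omega), if_neg (by omega)]

include hu in
lemma cnt_lt_of_lt_orderStat (k : ℕ) (hk1 : 1 ≤ k) (hkn : k ≤ n) {x : ℝ}
    (hx : x < orderStat n u k) : cnt u x < k := by
  rw [orderStat_eq k hk1 hkn] at hx
  by_contra h
  push_neg at h
  have : x ∈ {x : ℝ | k ≤ cnt u x} := h
  have := csInf_le (SSet_bddBelow hu k hk1) this
  linarith

include hu in
lemma le_cnt_orderStat (k : ℕ) (hk1 : 1 ≤ k) (hkn : k ≤ n) :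
    k ≤ cnt u (orderStat n u k) := by
  set m := orderStat n u k with hm
  by_contra h
  push_neg at h
  -- all points above m are bounded away
  have hTne : (Finset.univ.filter fun i : Fin n => m < u i).Nonempty := by
    by_contra hT
    rw [Finset.not_nonempty_iff_eq_empty] at hT
    have : cnt u m = n := by
      have : (Finset.univ.filter fun i : Fin n => u i ≤ m) = Finset.univ := by
        apply Finset.filter_true_of_mem
        intro i _
        by_contra hi
        push_neg at hi
        have : i ∈ Finset.univ.filter fun i : Fin n => m < u i := by
          simp [hi]
        rw [hT] at this
        exact absurd this (Finset.notMem_empty i)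
      simp [cnt, this]
    omega
  set b := (Finset.univ.filter fun i : Fin n => m < u i).inf' hTne u with hb
  have hmb : m < b := by
    rw [hb]
    rw [Finset.lt_inf'_iff]
    intro i hi
    exact (Finset.mem_filter.mp hi).2
  have hble : b ≤ sInf {x : ℝ | k ≤ cnt u x} := by
    apply le_csInf ⟨1, SSet_nonempty hu k hkn⟩
    intro y hy
    by_contra hyb
    push_neg at hyb
    have hmy : m ≤ y := by
      rw [orderStat_eq k hk1 hkn] at hm
      rw [hm]
      exact csInf_le (SSet_bddBelow hu k hk1) hy
    have : cnt u y ≤ cnt u m := by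
      apply Finset.card_le_card
      intro i hi
      simp only [Finset.mem_filter, Finset.mem_univ, true_and] at hi ⊢
      by_contra him
      push_neg at him
      have : i ∈ Finset.univ.filter fun i : Fin n => m < u i := by simp [him]
      have hbu : b ≤ u i := Finset.inf'_le u this
      linarith
    simp only [Set.mem_setOf_eq] at hy
    omega
  rw [orderStat_eq k hk1 hkn] at hm
  rw [← hm] at hble
  linarith

include hu in
lemma orderStat_mem_range (k : ℕ) (hk1 : 1 ≤ k) (hkn : k ≤ n) :
    ∃ i, u i = orderStat n u k := by
  set m := orderStat n u k with hm
  have h1 : k ≤ cnt u m := le_cnt_orderStat hu k hk1 hkn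
  have hFne : (Finset.univ.filter fun i : Fin n => u i ≤ m).Nonempty := by
    rw [← Finset.card_pos]
    have : 0 < k := hk1
    unfold cnt at h1
    omega
  obtain ⟨i0, hi0mem, hi0⟩ := Finset.exists_mem_eq_sup' hFne u
  refine ⟨i0, ?_⟩
  have hle : u i0 ≤ m := (Finset.mem_filter.mp hi0mem).2
  rcases lt_or_eq_of_le hle with hlt | heq
  · exfalso
    have : cnt u m ≤ cnt u (u i0) := by
      apply Finset.card_le_card
      intro j hj
      simp only [Finset.mem_filter, Finset.mem_univ, true_and] at hj ⊢
      have : u j ≤ (Finset.univ.filter fun i : Fin n => u i ≤ m).sup' hFne u :=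
        Finset.le_sup' u (by simp [hj])
      rw [hi0] at this
      exact this
    have hki0 : k ≤ cnt u (u i0) := le_trans h1 this
    have := cnt_lt_of_lt_orderStat hu k hk1 hkn hlt
    omega
  · exact heq

end OrderStat

section Sets

/-- Event that all coordinates exceed `c` (gap at the left end). -/
def A0 (n : ℕ) (c : ℝ) : Set (Fin n → ℝ) := {u | ∀ j, c < u j}

/-- Event that the interval `(u i, u i + c]` lies in `(0,1)` at the right and no point is in it. -/
def Ai (n : ℕ) (c : ℝ) (i : Fin n) : Set (Fin n → ℝ) :=
  {u | u i + c < 1 ∧ ∀ j, u j ∉ Set.Ioc (u i) (u i + c)}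

lemma orderStat_zero (n : ℕ) (u : Fin n → ℝ) : orderStat n u 0 = 0 := by
  simp [orderStat]

lemma orderStat_top (n : ℕ) (u : Fin n → ℝ) : orderStat n u (n + 1) = 1 := by
  unfold orderStat
  rw [if_neg (by omega), if_pos rfl]

lemma event_subset (n : ℕ) (hn : 1 ≤ n) (c : ℝ) :
    {u : Fin n → ℝ | (∀ i, u i ∈ Set.Ioo (0 : ℝ) 1) ∧
        ∃ k ≤ n, c < orderStat n u (k + 1) - orderStat n u k} ⊆
      A0 n c ∪ ⋃ i, Ai n c i := by
  rintro u ⟨hu, k, hk, hspac⟩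
  rcases Nat.eq_zero_or_pos k with rfl | hk1
  · -- k = 0 : min exceeds c
    left
    rw [orderStat_zero] at hspac
    have h1 : orderStat n u 1 = sInf {x : ℝ | 1 ≤ cnt u x} := orderStat_eq 1 le_rfl hn
    intro j
    have hj : u j ∈ {x : ℝ | 1 ≤ cnt u x} := by
      have : j ∈ Finset.univ.filter fun i : Fin n => u i ≤ u j := by simp
      have : 0 < cnt u (u j) := Finset.card_pos.mpr ⟨j, this⟩
      simpa [cnt] using this
    have := csInf_le (SSet_bddBelow hu 1 le_rfl) hj
    rw [h1] at hspac
    linarith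
  · right
    set m := orderStat n u k with hm
    obtain ⟨i, hi⟩ := orderStat_mem_range hu k hk1 hk
    refine Set.mem_iUnion.mpr ⟨i, ?_⟩
    rcases eq_or_lt_of_le hk with rfl | hkn
    · -- k = n
      rw [orderStat_top] at hspac
      have hic : u i + c < 1 := by rw [hi]; linarith
      refine ⟨hic, fun j hj => ?_⟩
      have hcard : k ≤ cnt u m := le_cnt_orderStat hu k hk1 le_rfl
      have hle : cnt u m ≤ k := by
        unfold cnt
        calc (Finset.univ.filter fun l : Fin k => u l ≤ m).card
            ≤ (Finset.univ : Finset (Fin k)).card := Finset.card_le_card (Finset.filter_subset _ _)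
          _ = k := by simp
      have : (Finset.univ.filter fun l : Fin k => u l ≤ m) = Finset.univ := by
        apply Finset.eq_univ_of_card
        rw [Fintype.card_fin]
        unfold cnt at hcard hle
        omega
      have hjm : u j ≤ m := by
        have : j ∈ Finset.univ.filter fun l : Fin k => u l ≤ m := by rw [this]; simp
        exact (Finset.mem_filter.mp this).2
      rw [hi] at hj
      exact absurd hj.1 (by linarith)
    · -- k < n
      set m' := orderStat n u (k + 1) with hm'
      have hk1n : k + 1 ≤ n := hkn
      obtain ⟨i', hi'⟩ := orderStat_mem_range hu (k + 1) (by omega) hk1n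
      have hm'lt1 : m' < 1 := by rw [hm', ← hi']; exact (hu i').2
      have hic : u i + c < 1 := by
        rw [hi]
        have : m + c < m' := by linarith
        linarith
      refine ⟨hic, fun j hj => ?_⟩
      rw [hi] at hj
      have hjm' : u j < m' := by
        have : m + c < m' := by linarith
        exact lt_of_le_of_lt hj.2 this
      have hlt : cnt u (u j) < k + 1 := cnt_lt_of_lt_orderStat hu (k + 1) (by omega) hk1n hjm'
      have hge : k ≤ cnt u m := le_cnt_orderStat hu k hk1 hk
      have hss : (Finset.univ.filter fun l : Fin n => u l ≤ m) ⊂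
          (Finset.univ.filter fun l : Fin n => u l ≤ u j) := by
        constructor
        · intro l hl
          simp only [Finset.mem_filter, Finset.mem_univ, true_and] at hl ⊢
          linarith [hj.1]
        · intro hsub
          have : j ∈ Finset.univ.filter fun l : Fin n => u l ≤ u j := by simp
          have := hsub this
          simp only [Finset.mem_filter, Finset.mem_univ, true_and] at this
          linarith [hj.1]
      have := Finset.card_lt_card hss
      unfold cnt at hlt
      unfold cnt at hge
      omega

end Sets

section Meas

instance : IsProbabilityMeasure unifMeas := by
  constructor
  rw [unifMeas, Measure.restrict_apply MeasurableSet.univ, Set.univ_inter, Real.volume_Ioo]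
  norm_num

lemma unifMeas_Ioi (c : ℝ) (hc0 : 0 ≤ c) (hc1 : c ≤ 1) :
    unifMeas (Set.Ioi c) = ENNReal.ofReal (1 - c) := by
  rw [unifMeas, Measure.restrict_apply measurableSet_Ioi]
  have : Set.Ioi c ∩ Set.Ioo (0:ℝ) 1 = Set.Ioo c 1 := by
    ext x
    simp only [Set.mem_inter_iff, Set.mem_Ioi, Set.mem_Ioo]
    constructor
    · rintro ⟨h1, _, h3⟩; exact ⟨h1, h3⟩
    · rintro ⟨h1, h2⟩; exact ⟨h1, by linarith, h2⟩
  rw [this, Real.volume_Ioo]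

lemma unifMeas_Iio (c : ℝ) (hc0 : 0 ≤ c) (hc1 : c ≤ 1) :
    unifMeas (Set.Iio (1 - c)) = ENNReal.ofReal (1 - c) := by
  rw [unifMeas, Measure.restrict_apply measurableSet_Iio]
  have : Set.Iio (1 - c) ∩ Set.Ioo (0:ℝ) 1 = Set.Ioo 0 (1 - c) := by
    ext x
    simp only [Set.mem_inter_iff, Set.mem_Iio, Set.mem_Ioo]
    constructor
    · rintro ⟨h1, h2, _⟩; exact ⟨h2, h1⟩
    · rintro ⟨h1, h2⟩; exact ⟨h2, h1, by linarith⟩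
  rw [this, Real.volume_Ioo]
  norm_num

lemma unifMeas_Ioc_compl {x c : ℝ} (hc0 : 0 ≤ c) (hx0 : 0 < x) (hx1 : x + c < 1) :
    unifMeas ((Set.Ioc x (x + c))ᶜ) = ENNReal.ofReal (1 - c) := by
  rw [unifMeas, Measure.restrict_apply (measurableSet_Ioc.compl)]
  have hsub : Set.Ioc x (x + c) ⊆ Set.Ioo (0:ℝ) 1 := by
    rintro y ⟨h1, h2⟩
    exact ⟨by linarith, by linarith⟩
  have : (Set.Ioc x (x + c))ᶜ ∩ Set.Ioo (0:ℝ) 1 = Set.Ioo (0:ℝ) 1 \ Set.Ioc x (x + c) := by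
    rw [Set.diff_eq, Set.inter_comm]
  rw [this, measure_diff hsub measurableSet_Ioc.nullMeasurableSet (by simp [Real.volume_Ioc]),
    Real.volume_Ioo, Real.volume_Ioc]
  norm_num
  rw [← ENNReal.ofReal_one, ← ENNReal.ofReal_sub 1 hc0]

lemma measure_A0 (n : ℕ) (c : ℝ) (hc0 : 0 ≤ c) (hc1 : c ≤ 1) :
    unifPi n (A0 n c) = (ENNReal.ofReal (1 - c)) ^ n := by
  have : A0 n c = Set.pi Set.univ fun _ : Fin n => Set.Ioi c := by
    ext u
    simp [A0, Set.mem_pi]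
  rw [unifPi, this, Measure.pi_pi]
  simp [unifMeas_Ioi c hc0 hc1]

lemma measure_Ai (m : ℕ) (c : ℝ) (hc0 : 0 ≤ c) (hc1 : c ≤ 1) (i : Fin (m + 1)) :
    unifPi (m + 1) (Ai (m + 1) c i) ≤ (ENNReal.ofReal (1 - c)) ^ (m + 1) := by
  set e := MeasurableEquiv.piFinSuccAbove (fun _ : Fin (m + 1) => ℝ) i with he
  set B : Set (ℝ × (Fin m → ℝ)) :=
    {p | p.1 + c < 1 ∧ ∀ j, p.2 j ∉ Set.Ioc p.1 (p.1 + c)} with hB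
  have hmp := measurePreserving_piFinSuccAbove (fun _ : Fin (m + 1) => unifMeas) i
  have hAeq : Ai (m + 1) c i = e ⁻¹' B := by
    ext u
    simp only [Ai, Set.mem_setOf_eq, Set.mem_preimage, hB, he,
      MeasurableEquiv.piFinSuccAbove_apply, Fin.insertNthEquiv_symm_apply, Fin.removeNth]
    constructor
    · rintro ⟨h1, h2⟩
      exact ⟨h1, fun j => h2 _⟩
    · rintro ⟨h1, h2⟩
      refine ⟨h1, fun j => ?_⟩
      rcases eq_or_ne j i with rfl | hne
      · rintro ⟨hlt, _⟩; exact absurd hlt (lt_irrefl _)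
      · obtain ⟨j', rfl⟩ := Fin.exists_succAbove_eq hne
        exact h2 j'
  have hBmeas : MeasurableSet B := by
    have h1 : MeasurableSet {p : ℝ × (Fin m → ℝ) | p.1 + c < 1} :=
      measurableSet_lt (measurable_fst.add_const c) measurable_const
    have h2 : ∀ j : Fin m, MeasurableSet {p : ℝ × (Fin m → ℝ) | p.2 j ∉ Set.Ioc p.1 (p.1 + c)} := by
      intro j
      have : MeasurableSet {p : ℝ × (Fin m → ℝ) | p.1 < p.2 j ∧ p.2 j ≤ p.1 + c} := by
        apply MeasurableSet.inter
        · exact measurableSet_lt measurable_fst ((measurable_pi_apply j).comp measurable_snd)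
        · exact measurableSet_le ((measurable_pi_apply j).comp measurable_snd)
            (measurable_fst.add_const c)
      exact this.compl
    have : B = {p : ℝ × (Fin m → ℝ) | p.1 + c < 1} ∩
        ⋂ j, {p : ℝ × (Fin m → ℝ) | p.2 j ∉ Set.Ioc p.1 (p.1 + c)} := by
      ext p
      simp [hB, Set.mem_iInter]
    rw [this]
    exact h1.inter (MeasurableSet.iInter h2)
  rw [unifPi, hAeq, hmp.measure_preimage_equiv B]
  rw [Measure.prod_apply hBmeas]
  calc ∫⁻ x, (Measure.pi fun _ : Fin m => unifMeas) (Prod.mk x ⁻¹' B) ∂unifMeas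
      ≤ ∫⁻ x, (Set.Iio (1 - c)).indicator
          (fun _ => (ENNReal.ofReal (1 - c)) ^ m) x ∂unifMeas := by
        apply lintegral_mono_ae
        have hpt : ∀ x ∈ Set.Ioo (0:ℝ) 1,
            (Measure.pi fun _ : Fin m => unifMeas) (Prod.mk x ⁻¹' B) ≤
              (Set.Iio (1 - c)).indicator (fun _ => (ENNReal.ofReal (1 - c)) ^ m) x := ?_
        · rw [unifMeas]
          exact ae_restrict_of_forall_mem measurableSet_Ioo hpt
        intro x hx
        by_cases hxc : x + c < 1
        · have hxmem : x ∈ Set.Iio (1 - c) := by simp only [Set.mem_Iio]; linarith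
          rw [Set.indicator_of_mem hxmem]
          have hslice : Prod.mk x ⁻¹' B =
              Set.pi Set.univ fun _ : Fin m => (Set.Ioc x (x + c))ᶜ := by
            ext v
            simp [hB, Set.mem_pi, hxc]
          rw [hslice, Measure.pi_pi]
          rw [unifMeas_Ioc_compl hc0 hx.1 hxc]
          simp
        · have hslice : Prod.mk x ⁻¹' B = ∅ := by
            ext v
            simp [hB, hxc]
          rw [hslice]
          simp
    _ = (ENNReal.ofReal (1 - c)) ^ m * unifMeas (Set.Iio (1 - c)) := by
        rw [lintegral_indicator measurableSet_Iio, setLIntegral_const]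
    _ = (ENNReal.ofReal (1 - c)) ^ (m + 1) := by
        rw [unifMeas_Iio c hc0 hc1, pow_succ]

end Meas

/-- For `n ≥ 1` and `0 ≤ c ≤ 1`, the probability that some consecutive
spacing of the order statistics of `n` i.i.d. `Uniform(0,1)` variables (with boundary
conventions `u_(0) = 0`, `u_(n+1) = 1`) exceeds `c` is at most `(n+1)(1 − c)^n`. -/
theorem stmt13 (n : ℕ) (hn : 1 ≤ n) (c : ℝ) (hc0 : 0 ≤ c) (hc1 : c ≤ 1) :
    unifPi n
        {u : Fin n → ℝ | (∀ i, u i ∈ Set.Ioo (0 : ℝ) 1) ∧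
          ∃ k ≤ n, c < orderStat n u (k + 1) - orderStat n u k} ≤
      (n + 1 : ℝ≥0∞) * ENNReal.ofReal ((1 - c) ^ n) := by
  obtain ⟨m, rfl⟩ : ∃ m, n = m + 1 := ⟨n - 1, by omega⟩
  have hq : ENNReal.ofReal ((1 - c) ^ (m + 1)) = (ENNReal.ofReal (1 - c)) ^ (m + 1) :=
    ENNReal.ofReal_pow (by linarith) _
  rw [hq]
  set q := (ENNReal.ofReal (1 - c)) ^ (m + 1) with hqdef
  calc unifPi (m + 1) {u : Fin (m+1) → ℝ | (∀ i, u i ∈ Set.Ioo (0 : ℝ) 1) ∧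
          ∃ k ≤ m + 1, c < orderStat (m+1) u (k + 1) - orderStat (m+1) u k}
      ≤ unifPi (m + 1) (A0 (m+1) c ∪ ⋃ i, Ai (m+1) c i) :=
        measure_mono (event_subset (m+1) hn c)
    _ ≤ unifPi (m + 1) (A0 (m+1) c) + unifPi (m + 1) (⋃ i, Ai (m+1) c i) :=
        measure_union_le _ _
    _ ≤ unifPi (m + 1) (A0 (m+1) c) + ∑ i : Fin (m+1), unifPi (m + 1) (Ai (m+1) c i) := by
        gcongr
        exact measure_iUnion_fintype_le _ _
    _ ≤ q + ∑ i : Fin (m+1), q := by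
        gcongr with i
        · exact le_of_eq (measure_A0 (m+1) c hc0 hc1)
        · exact measure_Ai m c hc0 hc1 i
    _ = (↑(m + 1) + 1) * q := by
        rw [Finset.sum_const, Finset.card_univ, Fintype.card_fin, nsmul_eq_mul]
        ring
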